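/- arXiv:2209.06397 — 3 statements merged into one kernel-verified Lean document; each statement's English description precedes it below -/
import Mathlib

section
/- Let p and q be distinct primes, N = p·q, and λ = lcm(p-1, q-1). Then for every natural number r coprime to N, r^(N·λ) ≡ 1 (mod N²). That is, raising any unit modulo N² to the power N·λ yields 1, which eliminates the randomness factor r^N during Paillier decryption. -/
/-- Raising any unit modulo `N²` to the power `N * λ` yields `1`:
`r ^ (N * λ) ≡ 1 [MOD N²]` for `N = p * q` and `λ = lcm (p-1) (q-1)`. -/
theorem paillier_randomness_elimination (p q : ℕ) (hp : p.Prime) (hq : q.Prime)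
    (hpq : p ≠ q) (N lam : ℕ) (hN : N = p * q) (hlam : lam = Nat.lcm (p - 1) (q - 1))
    (r : ℕ) (hr : Nat.Coprime r N) :
    r ^ (N * lam) ≡ 1 [MOD N ^ 2] := by
  subst hN hlam
  have hrp : Nat.Coprime r p := (Nat.Coprime.coprime_dvd_right ⟨q, rfl⟩ hr)
  have hrq : Nat.Coprime r q := (Nat.Coprime.coprime_dvd_right ⟨p, mul_comm p q⟩ hr)
  have key : ∀ s : ℕ, s.Prime → Nat.Coprime r s →
      (s * (s - 1)) ∣ (p * q * Nat.lcm (p - 1) (q - 1)) →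
      r ^ (p * q * Nat.lcm (p - 1) (q - 1)) ≡ 1 [MOD s ^ 2] := by
    intro s hs hrs hdvd
    have ht : (s ^ 2).totient = s * (s - 1) := by
      have := Nat.totient_prime_pow hs (n := 2) (by norm_num)
      simpa using this
    have heuler : r ^ (s ^ 2).totient ≡ 1 [MOD s ^ 2] :=
      Nat.ModEq.pow_totient (by
        simpa [Nat.coprime_pow_right_iff (by norm_num : 0 < 2)] using hrs)
    obtain ⟨k, hk⟩ := hdvd
    calc r ^ (p * q * Nat.lcm (p - 1) (q - 1)) = (r ^ (s * (s - 1))) ^ k := by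
          rw [← pow_mul, hk]
      _ ≡ 1 ^ k [MOD s ^ 2] := Nat.ModEq.pow _ (ht ▸ heuler)
      _ = 1 := one_pow k
  have hp2 := key p hp hrp
    (mul_dvd_mul ⟨q, rfl⟩ (Nat.dvd_lcm_left _ _))
  have hq2 := key q hq hrq
    (mul_dvd_mul ⟨p, mul_comm p q⟩ (Nat.dvd_lcm_right _ _))
  have hcop : Nat.Coprime (p ^ 2) (q ^ 2) :=
    ((Nat.coprime_primes hp hq).2 hpq).pow _ _
  have := (Nat.modEq_and_modEq_iff_modEq_mul hcop).1 ⟨hp2, hq2⟩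
  simpa [mul_pow] using this
end

section
/- Let p and q be distinct primes, N = p·q, and λ = lcm(p-1, q-1). Then for every message m and every randomness r coprime to N, the following identity holds in ZMod (N²): ((1 + N)^m · r^N)^λ = 1 + (m·λ)·N. That is, raising the Paillier ciphertext of m (with base g = 1 + N) to the secret exponent λ produces an element congruent to 1 + m·λ·N modulo N², from which the decryption function L(x) = (x-1)/N followed by multiplication by λ^{-1} mod N recovers m. -/
lemma binom_pow (N : ℕ) (k : ℕ) :
    (((1 + N : ℕ) : ZMod (N ^ 2)) ^ k) = ((1 + k * N : ℕ) : ZMod (N ^ 2)) := by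
  have hNN : ((N : ZMod (N ^ 2)) * N) = 0 := by
    have : ((N ^ 2 : ℕ) : ZMod (N ^ 2)) = 0 := by
      exact_mod_cast ZMod.natCast_self (N ^ 2)
    push_cast at this
    linear_combination this
  induction k with
  | zero => simp
  | succ n ih =>
    have : (((1 + N : ℕ) : ZMod (N ^ 2)) ^ (n + 1)) =
        (((1 + N : ℕ) : ZMod (N ^ 2)) ^ n) * ((1 + N : ℕ) : ZMod (N ^ 2)) := by ring
    rw [this, ih]
    push_cast
    linear_combination (n : ZMod (N ^ 2)) * hNN

lemma euler_part (p N lam r : ℕ) (hp : p.Prime) (hrp : Nat.Coprime r p)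
    (hdvd : p * (p - 1) ∣ N * lam) :
    r ^ (N * lam) ≡ 1 [MOD p ^ 2] := by
  have ht : (p ^ 2).totient = p * (p - 1) := by
    rw [Nat.totient_prime_pow hp (by norm_num)]; norm_num
  obtain ⟨k, hk⟩ := hdvd
  have hcop : Nat.Coprime r (p ^ 2) := hrp.pow_right 2
  have := Nat.ModEq.pow_totient hcop
  rw [ht] at this
  calc r ^ (N * lam) = (r ^ (p * (p - 1))) ^ k := by rw [← pow_mul, ← hk]
    _ ≡ 1 ^ k [MOD p ^ 2] := this.pow k
    _ = 1 := one_pow k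

/-- Raising the Paillier ciphertext of `m` (with base `g = 1 + N`) to the secret
exponent `λ` produces `1 + m * λ * N` in `ZMod (N²)`. -/
theorem paillier_decryption_identity (p q : ℕ) (hp : p.Prime) (hq : q.Prime)
    (hpq : p ≠ q) (N lam : ℕ) (hN : N = p * q) (hlam : lam = Nat.lcm (p - 1) (q - 1))
    (m r : ℕ) (hr : Nat.Coprime r N) :
    ((((1 + N : ℕ) : ZMod (N ^ 2)) ^ m * ((r : ℕ) : ZMod (N ^ 2)) ^ N) ^ lam) =
    ((1 + (m * lam) * N : ℕ) : ZMod (N ^ 2)) := by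
  have hrp : Nat.Coprime r p := by
    subst hN; exact Nat.Coprime.coprime_dvd_right ⟨q, rfl⟩ hr
  have hrq : Nat.Coprime r q := by
    subst hN; exact Nat.Coprime.coprime_dvd_right ⟨p, mul_comm p q⟩ hr
  have hdp : p * (p - 1) ∣ N * lam := by
    rw [hN, hlam]
    have h1 : p - 1 ∣ Nat.lcm (p - 1) (q - 1) := Nat.dvd_lcm_left _ _
    obtain ⟨c, hc⟩ := h1
    exact ⟨q * c, by rw [hc]; ring⟩
  have hdq : q * (q - 1) ∣ N * lam := by
    rw [hN, hlam]
    have h1 : q - 1 ∣ Nat.lcm (p - 1) (q - 1) := Nat.dvd_lcm_right _ _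
    obtain ⟨c, hc⟩ := h1
    exact ⟨p * c, by rw [hc]; ring⟩
  have hmp := euler_part p N lam r hp hrp hdp
  have hmq := euler_part q N lam r hq hrq hdq
  have hcop : Nat.Coprime (p ^ 2) (q ^ 2) :=
    Nat.Coprime.pow 2 2 ((Nat.coprime_primes hp hq).mpr hpq)
  have hmN : r ^ (N * lam) ≡ 1 [MOD N ^ 2] := by
    have := (Nat.modEq_and_modEq_iff_modEq_mul hcop).mp ⟨hmp, hmq⟩
    have hNe : N ^ 2 = p ^ 2 * q ^ 2 := by rw [hN]; ring
    rwa [hNe]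
  have hr1 : ((r : ℕ) : ZMod (N ^ 2)) ^ (N * lam) = 1 := by
    have := (ZMod.natCast_eq_natCast_iff _ _ _).mpr hmN
    exact_mod_cast this
  calc ((((1 + N : ℕ) : ZMod (N ^ 2)) ^ m * ((r : ℕ) : ZMod (N ^ 2)) ^ N) ^ lam)
      = (((1 + N : ℕ) : ZMod (N ^ 2)) ^ (m * lam)) *
        (((r : ℕ) : ZMod (N ^ 2)) ^ (N * lam)) := by
        rw [mul_pow, ← pow_mul, ← pow_mul]
    _ = ((1 + (m * lam) * N : ℕ) : ZMod (N ^ 2)) := by rw [hr1, binom_pow, mul_one]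
end

section
/- Let p and q be distinct primes, N = p·q, and λ = lcm(p-1, q-1), and assume λ is coprime to N. Let m₁, m₂ < N be messages and r₁, r₂ natural numbers coprime to N. If the two Paillier ciphertexts with base g = 1 + N coincide in ZMod (N²), i.e., (1 + N)^{m₁} · r₁^N = (1 + N)^{m₂} · r₂^N, then m₁ = m₂. That is, Paillier decryption is well-defined: a ciphertext determines its plaintext message uniquely. -/
/-- Paillier decryption is well-defined: a ciphertext determines its plaintext
message uniquely. -/
theorem paillier_decryption_injective (p q : ℕ) (hp : p.Prime) (hq : q.Prime)
    (hpq : p ≠ q) (N lam : ℕ) (hN : N = p * q) (hlam : lam = Nat.lcm (p - 1) (q - 1))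
    (hcl : Nat.Coprime lam N) (m₁ m₂ r₁ r₂ : ℕ) (hm₁ : m₁ < N) (hm₂ : m₂ < N)
    (hr₁ : Nat.Coprime r₁ N) (hr₂ : Nat.Coprime r₂ N)
    (heq : (((1 + N : ℕ) : ZMod (N ^ 2))) ^ m₁ * ((r₁ : ℕ) : ZMod (N ^ 2)) ^ N =
           (((1 + N : ℕ) : ZMod (N ^ 2))) ^ m₂ * ((r₂ : ℕ) : ZMod (N ^ 2)) ^ N) :
    m₁ = m₂ := by
  have hN0 : 0 < N := by
    subst hN; exact Nat.mul_pos hp.pos hq.pos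
  set φ := (p - 1) * (q - 1) with hφ
  -- (1+N)^k = 1 + k*N in ZMod (N^2)
  have hNN : (N : ZMod (N ^ 2)) * N = 0 := by
    have h : ((N ^ 2 : ℕ) : ZMod (N ^ 2)) = 0 := ZMod.natCast_self _
    push_cast at h
    linear_combination h
  have hA : ∀ k : ℕ, (((1 + N : ℕ) : ZMod (N ^ 2))) ^ k = 1 + ((k * N : ℕ) : ZMod (N ^ 2)) := by
    intro k
    induction k with
    | zero => simp
    | succ k ih =>
      push_cast at ih ⊢
      linear_combination (1 + (N : ZMod (N ^ 2))) * ih + (k : ZMod (N ^ 2)) * hNN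
  -- totient of N^2
  have htot : Nat.totient (N ^ 2) = N * φ := by
    subst hN
    have hco : Nat.Coprime (p ^ 2) (q ^ 2) :=
      Nat.Coprime.pow _ _ ((Nat.coprime_primes hp hq).mpr hpq)
    rw [mul_pow, Nat.totient_mul hco, Nat.totient_prime_pow hp (by norm_num),
      Nat.totient_prime_pow hq (by norm_num)]
    ring
  -- Euler-type lemma
  have hEuler : ∀ r : ℕ, Nat.Coprime r N → ((r : ZMod (N ^ 2))) ^ (N * φ) = 1 := by
    intro r hr
    have hco : Nat.Coprime r (N ^ 2) := hr.pow_right 2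
    have h := Nat.ModEq.pow_totient hco
    rw [htot] at h
    have := (ZMod.natCast_eq_natCast_iff _ _ _).mpr h
    push_cast at this
    exact this
  -- raise heq to power φ
  have h2 : (((1 + N : ℕ) : ZMod (N ^ 2))) ^ (m₁ * φ) = (((1 + N : ℕ) : ZMod (N ^ 2))) ^ (m₂ * φ) := by
    have h := congrArg (· ^ φ) heq
    simp only [mul_pow, ← pow_mul] at h
    rw [hEuler r₁ hr₁, hEuler r₂ hr₂, mul_one, mul_one] at h
    exact h
  rw [hA, hA] at h2
  have h3 : (↑(m₁ * φ * N) : ZMod (N ^ 2)) = ↑(m₂ * φ * N) := by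
    have := add_left_cancel h2
    exact this
  have h4 : m₁ * φ * N ≡ m₂ * φ * N [MOD N ^ 2] :=
    (ZMod.natCast_eq_natCast_iff _ _ _).mp h3
  rw [pow_two] at h4
  have h5 : m₁ * φ ≡ m₂ * φ [MOD N] :=
    Nat.ModEq.mul_right_cancel' hN0.ne' h4
  have hφN : Nat.Coprime φ N := by
    have h1 : Nat.Coprime (p - 1) N :=
      Nat.Coprime.coprime_dvd_left (hlam ▸ Nat.dvd_lcm_left _ _) hcl
    have h2 : Nat.Coprime (q - 1) N :=
      Nat.Coprime.coprime_dvd_left (hlam ▸ Nat.dvd_lcm_right _ _) hcl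
    exact h1.mul h2
  have h6 : m₁ ≡ m₂ [MOD N] := Nat.ModEq.cancel_right_of_coprime (c := φ) hφN.symm h5
  exact Nat.ModEq.eq_of_lt_of_lt h6 hm₁ hm₂
end
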